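/- Let m be a positive integer and let α ∈ F_{2^m} be such that x³ + x + α has no root in F_{2^m}. Let F : F_{2^m} × F_{2^m} → F_{2^m} × F_{2^m} be defined by F(x, y) = (x³ + x·y² + α·y³, x⁵ + α·x⁴·y + (1+α²)·x·y⁴ + α·y⁵). Then F is 3-to-1: the preimage of (0,0) under F is exactly {(0,0)}, and for every nonzero element b in the image of F, the preimage F^{−1}(b) has exactly 3 elements. -/

import Mathlib

namespace Stmt14

variable {L : Type*} [Field L]

lemma cube_classify (h2 : (2:L) = 0) {e r : L} (he : e^2 + e + 1 = 0)
    (hr : r^3 = 1) : r = 1 ∨ r = e ∨ r = e + 1 := by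
  have key : (r - 1) * ((r - e) * (r - (e+1))) = 0 := by
    linear_combination hr + (r - 1)*he + (1 + r*e - r^2 - r^2*e)*h2
  rcases mul_eq_zero.1 key with h | h
  · exact Or.inl (sub_eq_zero.1 h)
  rcases mul_eq_zero.1 h with h | h
  · exact Or.inr (Or.inl (sub_eq_zero.1 h))
  · exact Or.inr (Or.inr (sub_eq_zero.1 h))

lemma exists_omega [Finite L] {θ : L} (hnc : ∀ w : L, w^3 ≠ θ) :
    ∃ e : L, e^2 + e + 1 = 0 ∧ e ≠ 1 := by
  have hni : ¬ Function.Injective (fun w : L => w^3) := by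
    intro hinj
    obtain ⟨w, hw⟩ := Finite.injective_iff_surjective.mp hinj θ
    exact hnc w hw
  obtain ⟨a, b, hab, hne⟩ := Function.not_injective_iff.mp hni
  have hab : a^3 = b^3 := hab
  have hb0 : b ≠ 0 := by
    rintro rfl
    exact hne (pow_eq_zero_iff (n := 3) (by norm_num) |>.mp (by simpa using hab))
  refine ⟨a * b⁻¹, ?_, ?_⟩
  · have he3 : (a*b⁻¹)^3 = 1 := by
      field_simp
      linear_combination hab
    have hfac : ((a*b⁻¹) - 1) * ((a*b⁻¹)^2 + (a*b⁻¹) + 1) = 0 := by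
      linear_combination he3
    rcases mul_eq_zero.1 hfac with h | h
    · exfalso
      apply hne
      have : a * b⁻¹ = 1 := by linear_combination h
      field_simp at this
      exact this
    · exact h
  · intro h
    apply hne
    field_simp at h
    exact h

lemma key_product {R : Type*} [CommRing R] (h2 : (2:R) = 0) {T Tb A B Ab Bb c3 ab : R}
    (h1 : T*Tb = 1) (hA : A*Ab = c3) (h3 : Tb*A + T*Ab = ab)
    (h4 : Tb*B + T*Bb = ab) (h5 : B*Bb = c3) :
    Tb*(A+B)*(A+T^2*Bb) = 0 := by
  linear_combination (T*A*Bb + T*B*Bb)*h1 + T*hA + A*h3 + A*h4 + T*h5 + (A*ab + T*c3 - T*A*Ab)*h2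

lemma f1_ne_zero {α x y : L} (hα : ∀ t : L, t^3 + t + α ≠ 0)
    (h : ¬(x = 0 ∧ y = 0)) : x^3 + x*y^2 + α*y^3 ≠ 0 := by
  intro h0
  by_cases hy : y = 0
  · subst hy
    refine h ⟨?_, rfl⟩
    have hx3 : x^3 = 0 := by linear_combination h0
    exact pow_eq_zero_iff (n := 3) (by norm_num) |>.mp hx3
  · apply hα (x/y)
    field_simp
    linear_combination h0

lemma g_ne_zero {α x y : L} (hirr : ∀ t : L, t^2 + α*t + 1 ≠ 0)
    (h : ¬(x = 0 ∧ y = 0)) : x^2 + α*x*y + y^2 ≠ 0 := by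
  intro h0
  by_cases hy : y = 0
  · subst hy
    refine h ⟨?_, rfl⟩
    have hx2 : x^2 = 0 := by linear_combination h0
    exact pow_eq_zero_iff (n := 2) (by norm_num) |>.mp hx2
  · apply hirr (x/y)
    field_simp
    linear_combination h0

-- the split case
lemma split_case {K : Type*} [Field K] [Finite K] {α : K}
    (h2 : (2:K) = 0) (hα : ∀ t : K, t^3 + t + α ≠ 0)
    {θ : K} (hθ : θ^2 + α*θ + 1 = 0) (x y : K) (hxy : ¬(x = 0 ∧ y = 0)) :
    {p : K × K | p.1^3 + p.1*p.2^2 + α*p.2^3 = x^3 + x*y^2 + α*y^3 ∧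
                 p.1^2 + α*p.1*p.2 + p.2^2 = x^2 + α*x*y + y^2}.ncard = 3 := by
  have hα0 : α ≠ 0 := by
    intro h
    exact hα 0 (by rw [h]; ring)
  have hαinv : α * α⁻¹ = 1 := mul_inv_cancel₀ hα0
  have hθb : θ * (θ + α) = 1 := by linear_combination hθ - h2
  have hθ0 : θ ≠ 0 := by intro h; rw [h] at hθb; simp at hθb
  have hθb0 : θ + α ≠ 0 := by intro h; rw [h] at hθb; simp at hθb
  have hnc : ∀ w : K, w^3 ≠ θ := by
    intro w hw
    have hw0 : w ≠ 0 := by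
      rintro rfl
      rw [zero_pow (by norm_num)] at hw
      exact hθ0 hw.symm
    have hs : w * w⁻¹ = 1 := mul_inv_cancel₀ hw0
    have hsT : (w⁻¹)^3 * θ = 1 := by
      linear_combination (-((w⁻¹)^3))*hw + ((w⁻¹)^2*w^2 + w⁻¹*w + 1)*hs
    have hmain : ((w + w⁻¹)^3 + (w + w⁻¹) + α) * θ = 0 := by
      linear_combination (3*w⁻¹*θ + 3*w*θ)*hs + θ*hw + hθ + hsT + (2*w⁻¹*θ + 2*w*θ)*h2
    exact hα (w + w⁻¹) ((mul_eq_zero.mp hmain).resolve_right hθ0)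
  have hLc : ∀ A B : K, B ≠ 0 → A^3 = θ^2*B^3 → False := by
    intro A B hB hAB
    apply hnc (A^2*(θ+α)*(B⁻¹)^2)
    have hiB : B * B⁻¹ = 1 := mul_inv_cancel₀ hB
    have h6 : A^6 = θ^4*B^6 := by linear_combination (A^3 + θ^2*B^3)*hAB
    have hiB6 : B^6*(B⁻¹)^6 = 1 := by rw [← mul_pow, hiB, one_pow]
    have hθ6 : (θ*(θ+α))^3 = 1 := by rw [hθb]; norm_num
    linear_combination ((θ+α)^3*(B⁻¹)^6)*h6 + (θ^4*(θ+α)^3)*hiB6 + θ*hθ6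
  obtain ⟨e, he, he1⟩ := exists_omega hnc
  have he3 : e^3 = 1 := by linear_combination (e-1)*he
  have he13 : (e+1)^3 = 1 := by linear_combination he3 + 3*he - h2
  have he0 : e ≠ 0 := by
    intro h; rw [h] at he; simp at he
  have he10 : e + 1 ≠ 0 := by
    intro h
    exact one_ne_zero (by linear_combination he - e*h : (1:K) = 0)
  have hemul : e*(e+1) = 1 := by linear_combination he - h2
  set z := x + y*θ with hzdef
  set w := x + y*(θ+α) with hwdef
  have hI1 : ∀ u v : K, (u + v*θ) * (u + v*(θ+α)) = u^2 + α*u*v + v^2 := by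
    intro u v
    linear_combination v^2*hθ + (u*v*θ - v^2)*h2
  have hI2 : ∀ u v : K, (θ+α)*(u + v*θ)^3 + θ*(u + v*(θ+α))^3
      = α*(u^3 + u*v^2 + α*v^3) := by
    intro u v
    linear_combination (-2*v^3 + 2*v^3*θ^2 + 2*v^3*α*θ + v^3*α^2 + 6*u*v^2*θ + 3*u*v^2*α + 6*u^2*v)*hθ
      + (v^3 - v^3*α^2 - 3*u*v^2*θ - 2*u*v^2*α - 3*u^2*v + u^3*θ)*h2
  have hzc : z * w = x^2 + α*x*y + y^2 := hI1 x y
  have hzb : (θ+α)*z^3 + θ*w^3 = α*(x^3 + x*y^2 + α*y^3) := hI2 x y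
  have hb0 : x^3 + x*y^2 + α*y^3 ≠ 0 := f1_ne_zero hα hxy
  have hzw0 : ¬ (z = 0 ∧ w = 0) := by
    rintro ⟨h1', h2'⟩
    apply hxy
    have hy : y = 0 := by
      have h' : α * y = 0 := by
        rw [hzdef] at h1'; rw [hwdef] at h2'
        linear_combination h2' - h1'
      exact (mul_eq_zero.mp h').resolve_left hα0
    refine ⟨?_, hy⟩
    rw [hzdef, hy] at h1'
    linear_combination h1'
  set v1 := (e*z + (e+1)*w) * α⁻¹ with hv1def
  set u1 := e*z - θ*v1 with hu1def
  set v2 := ((e+1)*z + e*w) * α⁻¹ with hv2def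
  set u2 := (e+1)*z - θ*v2 with hu2def
  have hαv1 : α*v1 = e*z + (e+1)*w := by
    rw [hv1def]; linear_combination (e*z + (e+1)*w)*hαinv
  have hαv2 : α*v2 = (e+1)*z + e*w := by
    rw [hv2def]; linear_combination ((e+1)*z + e*w)*hαinv
  have hU1 : u1 + v1*θ = e*z := by rw [hu1def]; ring
  have hW1 : u1 + v1*(θ+α) = (e+1)*w := by
    rw [hu1def]; linear_combination hαv1 + (e*z)*h2
  have hU2 : u2 + v2*θ = (e+1)*z := by rw [hu2def]; ring
  have hW2 : u2 + v2*(θ+α) = e*w := by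
    rw [hu2def]; linear_combination hαv2 + ((e+1)*z)*h2
  have hU0 : x + y*θ = z := hzdef.symm
  have hW0 : x + y*(θ+α) = w := hwdef.symm
  have hmem : ∀ u v Z W : K, (u + v*θ = Z) → (u + v*(θ+α) = W) →
      (Z^3 = z^3) → (W^3 = w^3) → (Z*W = z*w) →
      (u^3 + u*v^2 + α*v^3 = x^3 + x*y^2 + α*y^3 ∧
       u^2 + α*u*v + v^2 = x^2 + α*x*y + y^2) := by
    intro u v Z W hu hw3 hZ hW hZW
    constructor
    · have h := hI2 u v
      rw [hu, hw3] at h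
      apply mul_left_cancel₀ hα0
      rw [← h, ← hzb]
      linear_combination (θ+α)*hZ + θ*hW
    · have h := hI1 u v
      rw [hu, hw3] at h
      rw [← h, hZW, hzc]
  have hcoord : ∀ u v Z W : K, (u + v*θ = Z) → (u + v*(θ+α) = W) →
      ∀ u' v' : K, (u' + v'*θ = Z) → (u' + v'*(θ+α) = W) → u = u' ∧ v = v' := by
    intro u v Z W h1' h2' u' v' h3' h4'
    have hv : α*v = α*v' := by linear_combination h2' - h1' - h4' + h3'
    have hvv : v = v' := mul_left_cancel₀ hα0 hv
    refine ⟨?_, hvv⟩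
    have h5' := h1'.trans h3'.symm
    rw [hvv] at h5'
    linear_combination h5'
  rw [Set.ncard_eq_three]
  refine ⟨(x,y), (u1,v1), (u2,v2), ?_, ?_, ?_, ?_⟩
  · intro hEq
    rw [Prod.ext_iff] at hEq
    obtain ⟨hx', hy'⟩ := hEq
    simp only at hx' hy'
    have h1' : z = e*z := by
      calc z = x + y*θ := hzdef
      _ = u1 + v1*θ := by rw [hx', hy']
      _ = e*z := hU1
    have h2' : w = (e+1)*w := by
      calc w = x + y*(θ+α) := hwdef
      _ = u1 + v1*(θ+α) := by rw [hx', hy']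
      _ = (e+1)*w := hW1
    have hz0 : z = 0 := by
      have hfac : z * (1 - e) = 0 := by linear_combination h1'
      rcases mul_eq_zero.mp hfac with h | h
      · exact h
      · exact absurd (by linear_combination -h : e = (1:K)) he1
    have hw0 : w = 0 := by
      have hfac : w * e = 0 := by linear_combination -h2'
      exact (mul_eq_zero.mp hfac).resolve_right he0
    exact hzw0 ⟨hz0, hw0⟩
  · intro hEq
    rw [Prod.ext_iff] at hEq
    obtain ⟨hx', hy'⟩ := hEq
    simp only at hx' hy'
    have h1' : z = (e+1)*z := by
      calc z = x + y*θ := hzdef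
      _ = u2 + v2*θ := by rw [hx', hy']
      _ = (e+1)*z := hU2
    have h2' : w = e*w := by
      calc w = x + y*(θ+α) := hwdef
      _ = u2 + v2*(θ+α) := by rw [hx', hy']
      _ = e*w := hW2
    have hz0 : z = 0 := by
      have hfac : z * e = 0 := by linear_combination -h1'
      exact (mul_eq_zero.mp hfac).resolve_right he0
    have hw0 : w = 0 := by
      have hfac : w * (1 - e) = 0 := by linear_combination h2'
      rcases mul_eq_zero.mp hfac with h | h
      · exact h
      · exact absurd (by linear_combination -h : e = (1:K)) he1
    exact hzw0 ⟨hz0, hw0⟩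
  · intro hEq
    rw [Prod.ext_iff] at hEq
    obtain ⟨hx', hy'⟩ := hEq
    simp only at hx' hy'
    have h1' : e*z = (e+1)*z := by
      calc e*z = u1 + v1*θ := hU1.symm
      _ = u2 + v2*θ := by rw [hx', hy']
      _ = (e+1)*z := hU2
    have h2' : (e+1)*w = e*w := by
      calc (e+1)*w = u1 + v1*(θ+α) := hW1.symm
      _ = u2 + v2*(θ+α) := by rw [hx', hy']
      _ = e*w := hW2
    have hz0 : z = 0 := by linear_combination -h1'
    have hw0 : w = 0 := by linear_combination h2'
    exact hzw0 ⟨hz0, hw0⟩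
  · ext ⟨u,v⟩
    simp only [Set.mem_setOf_eq, Set.mem_insert_iff, Set.mem_singleton_iff, Prod.mk.injEq]
    constructor
    · rintro ⟨hf1eq, hgeq⟩
      obtain ⟨zu, hzu⟩ : ∃ t, u + v*θ = t := ⟨_, rfl⟩
      obtain ⟨wu, hwu⟩ : ∃ t, u + v*(θ+α) = t := ⟨_, rfl⟩
      have hzw' : zu * wu = z * w := by
        rw [← hzu, ← hwu, hI1 u v, hgeq, ← hzc]
      have hz'b : (θ+α)*zu^3 + θ*wu^3 = α*(x^3 + x*y^2 + α*y^3) := by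
        rw [← hzu, ← hwu, hI2 u v, hf1eq]
      have kp : (θ+α)*(zu^3+z^3)*(zu^3+θ^2*w^3) = 0 := by
        refine key_product (c3 := (z*w)^3) h2 hθb ?_ hz'b hzb ?_
        · rw [← mul_pow, hzw']
        · rw [← mul_pow]
      have hcases : zu^3 = z^3 ∨ zu^3 = θ^2*w^3 := by
        rcases mul_eq_zero.mp kp with h | h
        · rcases mul_eq_zero.mp h with h' | h'
          · exact absurd h' hθb0
          · left; linear_combination h' - z^3*h2
        · right; linear_combination h - θ^2*w^3*h2
      rcases hcases with hc | hc
      · -- zu^3 = z^3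
        have hwu3 : wu^3 = w^3 := by
          apply mul_left_cancel₀ hθ0
          linear_combination hz'b - hzb - (θ+α)*hc
        by_cases hz0 : z = 0
        · have hw0 : w ≠ 0 := fun h => hzw0 ⟨hz0, h⟩
          have hzu0 : zu = 0 := by
            refine pow_eq_zero_iff (n:=3) (by norm_num) |>.mp ?_
            rw [hc, hz0]; ring
          have hr : (wu*w⁻¹)^3 = 1 := by
            rw [mul_pow, hwu3]
            field_simp
          rcases cube_classify h2 he hr with h | h | h
          · left
            have hwuw : wu = w := by
              field_simp at h; exact h
            have := hcoord u v zu wu hzu hwu x y (by rw [hU0, hz0, hzu0]) (by rw [hW0, hwuw])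
            exact ⟨this.1, this.2⟩
          · right; right
            have hwuw : wu = e*w := by
              field_simp at h; linear_combination h
            have := hcoord u v zu wu hzu hwu u2 v2 (by rw [hU2, hz0, hzu0]; ring) (by rw [hW2, hwuw])
            exact ⟨this.1, this.2⟩
          · right; left
            have hwuw : wu = (e+1)*w := by
              field_simp at h; linear_combination h
            have := hcoord u v zu wu hzu hwu u1 v1 (by rw [hU1, hz0, hzu0]; ring) (by rw [hW1, hwuw])
            exact ⟨this.1, this.2⟩
        · have hr : (zu*z⁻¹)^3 = 1 := by
            rw [mul_pow, hc]
            field_simp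
          rcases cube_classify h2 he hr with h | h | h
          · left
            have hzuz : zu = z := by field_simp at h; exact h
            have hwuw : wu = w := by
              apply mul_left_cancel₀ hz0
              calc z * wu = zu * wu := by rw [hzuz]
              _ = z * w := hzw'
            have := hcoord u v zu wu hzu hwu x y (by rw [hU0, hzuz]) (by rw [hW0, hwuw])
            exact ⟨this.1, this.2⟩
          · right; left
            have hzuz : zu = e*z := by field_simp at h; linear_combination h
            have hwuw : wu = (e+1)*w := by
              apply mul_left_cancel₀ (mul_ne_zero he0 hz0)
              calc e*z*wu = zu*wu := by rw [hzuz]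
              _ = z*w := hzw'
              _ = e*z*((e+1)*w) := by linear_combination -z*w*hemul
            have := hcoord u v zu wu hzu hwu u1 v1 (by rw [hU1, hzuz]) (by rw [hW1, hwuw])
            exact ⟨this.1, this.2⟩
          · right; right
            have hzuz : zu = (e+1)*z := by field_simp at h; linear_combination h
            have hwuw : wu = e*w := by
              apply mul_left_cancel₀ (mul_ne_zero he10 hz0)
              calc (e+1)*z*wu = zu*wu := by rw [hzuz]
              _ = z*w := hzw'
              _ = (e+1)*z*(e*w) := by linear_combination -z*w*hemul
            have := hcoord u v zu wu hzu hwu u2 v2 (by rw [hU2, hzuz]) (by rw [hW2, hwuw])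
            exact ⟨this.1, this.2⟩
      · -- zu^3 = θ^2*w^3
        by_cases hw0 : w = 0
        · have hz0 : z ≠ 0 := fun h => hzw0 ⟨h, hw0⟩
          have hzu0 : zu = 0 := by
            refine pow_eq_zero_iff (n:=3) (by norm_num) |>.mp ?_
            rw [hc, hw0]; ring
          have hwu0 : wu ≠ 0 := by
            intro h
            apply hb0
            apply mul_left_cancel₀ hα0
            rw [mul_zero, ← hz'b, hzu0, h]
            ring
          have h' : θ*wu^3 = (θ+α)*z^3 := by
            have := hz'b
            rw [hzu0] at this
            rw [← hzb] at this
            rw [hw0] at this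
            linear_combination this
          have hkey : z^3 = θ^2*wu^3 := by
            linear_combination -θ*h' - z^3*hθb
          exact (hLc z wu hwu0 hkey).elim
        · exact (hLc zu w hw0 hc).elim
    · rintro (⟨hu', hv'⟩ | ⟨hu', hv'⟩ | ⟨hu', hv'⟩)
      · subst hu'; subst hv'; exact ⟨rfl, rfl⟩
      · subst hu'; subst hv'
        exact hmem u1 v1 (e*z) ((e+1)*w) hU1 hW1
          (by rw [mul_pow, he3, one_mul]) (by rw [mul_pow, he13, one_mul])
          (by linear_combination z*w*hemul)
      · subst hu'; subst hv'
        exact hmem u2 v2 ((e+1)*z) (e*w) hU2 hW2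
          (by rw [mul_pow, he13, one_mul]) (by rw [mul_pow, he3, one_mul])
          (by linear_combination z*w*hemul)
-- the field case: X^2 + αX + 1 has no root in K
lemma field_case {K : Type*} [Field K] [Finite K] {α : K}
    (h2 : (2:K) = 0) (hα : ∀ t : K, t^3 + t + α ≠ 0)
    (hirr : ∀ t : K, t^2 + α*t + 1 ≠ 0) (x y : K) (hxy : ¬(x = 0 ∧ y = 0)) :
    {p : K × K | p.1^3 + p.1*p.2^2 + α*p.2^3 = x^3 + x*y^2 + α*y^3 ∧
                 p.1^2 + α*p.1*p.2 + p.2^2 = x^2 + α*x*y + y^2}.ncard = 3 := by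
  have hα0 : α ≠ 0 := by
    intro h
    exact hα 0 (by rw [h]; ring)
  -- the quadratic polynomial
  set f : Polynomial K := Polynomial.X^2 + Polynomial.C α * Polynomial.X + Polynomial.C 1 with hfdef
  have hfd : f.natDegree = 2 := by
    rw [hfdef, show (Polynomial.X^2 + Polynomial.C α * Polynomial.X + Polynomial.C 1 : Polynomial K)
      = Polynomial.C 1 * Polynomial.X^2 + Polynomial.C α * Polynomial.X + Polynomial.C 1 by rw [map_one, one_mul]]
    exact Polynomial.natDegree_quadratic one_ne_zero
  have hf0 : f ≠ 0 := by
    intro h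
    rw [h] at hfd
    simp at hfd
  have hfirr : Irreducible f := by
    rw [Polynomial.irreducible_iff_roots_eq_zero_of_degree_le_three (by omega) (by omega)]
    by_contra hne
    obtain ⟨r, hr⟩ := Multiset.exists_mem_of_ne_zero hne
    rw [Polynomial.mem_roots hf0] at hr
    apply hirr r
    have := hr
    rw [hfdef] at this
    simpa [Polynomial.IsRoot, Polynomial.eval_add, Polynomial.eval_mul, Polynomial.eval_pow] using this
  haveI : Fact (Irreducible f) := ⟨hfirr⟩
  set θ : AdjoinRoot f := AdjoinRoot.root f with hθdef
  set a : K →+* AdjoinRoot f := algebraMap K (AdjoinRoot f) with hadef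
  have hainj : Function.Injective a := a.injective
  have h2E : (2 : AdjoinRoot f) = 0 := by
    rw [show (2 : AdjoinRoot f) = a 2 from (map_ofNat a 2).symm, h2, map_zero]
  have hθE : θ^2 + a α * θ + 1 = 0 := by
    have h := AdjoinRoot.eval₂_root f
    rw [hfdef] at h
    simp only [Polynomial.eval₂_add, Polynomial.eval₂_mul, Polynomial.eval₂_pow,
      Polynomial.eval₂_X, Polynomial.eval₂_C, Polynomial.eval₂_one] at h
    rw [hadef, AdjoinRoot.algebraMap_eq]
    exact h
  have hθbE : θ * (θ + a α) = 1 := by linear_combination hθE - h2E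
  have hθ0E : θ ≠ 0 := by intro h; rw [h] at hθbE; simp at hθbE
  have hθnotK : ∀ t : K, θ ≠ a t := by
    intro t h
    apply hirr t
    apply hainj
    rw [map_add, map_add, map_mul, map_pow, map_one, map_zero, ← h]
    exact hθE
  -- psi injectivity
  have hψinj : ∀ s u s' u' : K, a s + a u*θ = a s' + a u'*θ → s = s' ∧ u = u' := by
    intro s u s' u' h
    by_cases huu : u = u'
    · subst huu
      refine ⟨hainj ?_, rfl⟩
      have := add_right_cancel (a := a s) (b := a u * θ) (c := a s')
      exact this h
    · exfalso
      have hd : u - u' ≠ 0 := sub_ne_zero.mpr huu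
      have hdE : a (u - u') ≠ 0 := fun hh => hd (hainj (hh.trans (map_zero a).symm))
      apply hθnotK ((s' - s)/(u - u'))
      rw [map_div₀, eq_div_iff hdE]
      rw [map_sub, map_sub]
      linear_combination h
  -- psi surjectivity
  have hsurj : ∀ w : AdjoinRoot f, ∃ s u : K, w = a s + a u * θ := by
    intro w
    obtain ⟨g, hg, hw⟩ := (AdjoinRoot.powerBasis hf0).exists_eq_aeval w
    rw [AdjoinRoot.powerBasis_dim, hfd] at hg
    obtain ⟨c1, c0, hgeq⟩ := Polynomial.exists_eq_X_add_C_of_natDegree_le_one (by omega : g.natDegree ≤ 1)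
    refine ⟨c0, c1, ?_⟩
    rw [hw, hgeq, AdjoinRoot.powerBasis_gen]
    rw [map_add, Polynomial.aeval_C, Polynomial.aeval_mul, Polynomial.aeval_C, Polynomial.aeval_X]
    rw [hadef]
    ring
  haveI hfinE : Finite (AdjoinRoot f) := by
    refine Finite.of_surjective (fun p : K × K => a p.1 + a p.2 * θ) ?_
    intro w
    obtain ⟨s, u, h⟩ := hsurj w
    exact ⟨(s, u), h.symm⟩
  -- conjugation
  have hconjroot : (Polynomial.aeval (θ + a α)) f = 0 := by
    have h' := congrArg (Polynomial.aeval (θ + a α)) hfdef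
    simp only [map_add, map_mul, map_pow, Polynomial.aeval_X, Polynomial.aeval_C, map_one] at h'
    rw [h', ← hadef]
    linear_combination hθE + (θ*a α + (a α)^2)*h2E
  set conj : AdjoinRoot f →ₐ[K] AdjoinRoot f := AdjoinRoot.liftAlgHom f (Algebra.ofId K _) (θ + a α) hconjroot with hconjdef
  have hconjθ : conj θ = θ + a α := AdjoinRoot.liftAlgHom_root f _ _ hconjroot
  have hconja : ∀ t : K, conj (a t) = a t := fun t => conj.commutes t
  have hconjlin : ∀ s u : K, conj (a s + a u * θ) = a (s + α*u) + a u * θ := by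
    intro s u
    rw [map_add, map_mul, hconja, hconja, hconjθ, map_add, map_mul]
    ring
  have hinvol : ∀ X : AdjoinRoot f, conj (conj X) = X := by
    intro X
    obtain ⟨s, u, h⟩ := hsurj X
    rw [h, hconjlin, hconjlin, show s + α*u + α*u = s from by linear_combination α*u*h2]
  -- identities in E
  have hNvalE : ∀ X Y : AdjoinRoot f, (X + Y*θ) * (X + a α*Y + Y*θ) = X^2 + a α*X*Y + Y^2 := by
    intro X Y
    linear_combination Y^2*hθE + (X*Y*θ - Y^2)*h2E
  have hI2E : ∀ X Y : AdjoinRoot f, (θ + a α)*(X + Y*θ)^3 + θ*(X + a α*Y + Y*θ)^3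
      = a α*(X^3 + X*Y^2 + a α*Y^3) := by
    intro X Y
    linear_combination (-2*Y^3 + 2*Y^3*θ^2 + 2*Y^3*(a α)*θ + Y^3*(a α)^2 + 6*X*Y^2*θ + 3*X*Y^2*(a α) + 6*X^2*Y)*hθE
      + (Y^3 - Y^3*(a α)^2 - 3*X*Y^2*θ - 2*X*Y^2*(a α) - 3*X^2*Y + X^3*θ)*h2E
  have hNval : ∀ s u : K, (a s + a u*θ) * conj (a s + a u*θ) = a (s^2 + α*s*u + u^2) := by
    intro s u
    rw [hconjlin]
    simp only [map_add, map_mul, map_pow]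
    linear_combination hNvalE (a s) (a u)
  have hTval : ∀ s u : K, (θ + a α)*(a s + a u*θ)^3 + θ*(conj (a s + a u*θ))^3
      = a α * a (s^3 + s*u^2 + α*u^3) := by
    intro s u
    rw [hconjlin]
    simp only [map_add, map_mul, map_pow]
    linear_combination hI2E (a s) (a u)
  -- θ is not a cube in E
  have hnc : ∀ w : AdjoinRoot f, w^3 ≠ θ := by
    intro w hw
    obtain ⟨s, u, hsu⟩ := hsurj w
    have hν : w * conj w = a (s^2 + α*s*u + u^2) := by rw [hsu]; exact hNval s u
    have hνcube : (a (s^2 + α*s*u + u^2))^3 = 1 := by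
      calc (a (s^2 + α*s*u + u^2))^3 = (w * conj w)^3 := by rw [hν]
      _ = w^3 * conj (w^3) := by rw [map_pow]; ring
      _ = θ * conj θ := by rw [hw]
      _ = 1 := by rw [hconjθ]; exact hθbE
    obtain ⟨ν, hνdef⟩ : ∃ t, s^2 + α*s*u + u^2 = t := ⟨_, rfl⟩
    rw [hνdef] at hν hνcube
    have hw'cube : (a ν * w)^3 = θ := by rw [mul_pow, hνcube, hw, one_mul]
    have hN1 : (a ν * w) * conj (a ν * w) = 1 := by
      calc (a ν * w) * conj (a ν * w) = (a ν)^2 * (w * conj w) := by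
            rw [map_mul, hconja]; ring
      _ = (a ν)^2 * a ν := by rw [hν]
      _ = 1 := by rw [← pow_succ]; exact hνcube
    obtain ⟨w', hw'def⟩ : ∃ t, a ν * w = t := ⟨_, rfl⟩
    rw [hw'def] at hw'cube hN1
    have hconjt : conj (w' + conj w') = w' + conj w' := by
      rw [map_add, hinvol]; ring
    obtain ⟨p, r, hpr⟩ := hsurj (w' + conj w')
    have hr0 : r = 0 := by
      have h' : a (p + α*r) + a r*θ = a p + a r*θ := by
        rw [← hconjlin, ← hpr, hconjt, hpr]
      have := (hψinj (p + α*r) r p r h').1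
      have hαr : α * r = 0 := by linear_combination this
      exact (mul_eq_zero.mp hαr).resolve_left hα0
    have htap : w' + conj w' = a p := by rw [hpr, hr0, map_zero, zero_mul, add_zero]
    have hs3θ : (conj w')^3 * θ = 1 := by
      linear_combination (-((conj w')^3))*hw'cube + ((conj w')^2*w'^2 + conj w'*w' + 1)*hN1
    have hmain : ((w' + conj w')^3 + (w' + conj w') + a α) * θ = 0 := by
      linear_combination (3*(conj w')*θ + 3*w'*θ)*hN1 + θ*hw'cube + hθE + hs3θ
        + (2*(conj w')*θ + 2*w'*θ)*h2E
    have hcubic : (w' + conj w')^3 + (w' + conj w') + a α = 0 :=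
      (mul_eq_zero.mp hmain).resolve_right hθ0E
    apply hα p
    apply hainj
    rw [map_add, map_add, map_pow, map_zero, ← htap]
    exact hcubic
  -- not-cube consequence
  have hLc : ∀ A B : AdjoinRoot f, B ≠ 0 → A^3 = θ^2*B^3 → False := by
    intro A B hB hAB
    apply hnc (A^2*(θ + a α)*(B⁻¹)^2)
    have hiB : B * B⁻¹ = 1 := mul_inv_cancel₀ hB
    have h6 : A^6 = θ^4*B^6 := by linear_combination (A^3 + θ^2*B^3)*hAB
    have hiB6 : B^6*(B⁻¹)^6 = 1 := by rw [← mul_pow, hiB, one_pow]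
    have hθ6 : (θ*(θ + a α))^3 = 1 := by rw [hθbE]; norm_num
    linear_combination ((θ + a α)^3*(B⁻¹)^6)*h6 + (θ^4*(θ + a α)^3)*hiB6 + θ*hθ6
  -- cube root of unity in E
  obtain ⟨e, he, he1⟩ := exists_omega hnc
  have he3 : e^3 = 1 := by linear_combination (e-1)*he
  have he13 : (e+1)^3 = 1 := by linear_combination he3 + 3*he - h2E
  have he0 : e ≠ 0 := by
    intro h; rw [h] at he; simp at he
  have he10 : e + 1 ≠ 0 := by
    intro h
    exact one_ne_zero (by linear_combination he - e*h : (1 : AdjoinRoot f) = 0)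
  have hemul : e*(e+1) = 1 := by linear_combination he - h2E
  -- conj e = e + 1
  have hconje : conj e = e + 1 := by
    have hce : (conj e)^2 + conj e + 1 = 0 := by
      have h' := congrArg conj he
      rw [map_add, map_add, map_pow, map_one, map_zero] at h'
      exact h'
    have hfac : (conj e - e) * (conj e - (e+1)) = 0 := by
      linear_combination hce + he - ((conj e)*e + conj e + 1)*h2E
    rcases mul_eq_zero.mp hfac with h | h
    · exfalso
      have heq : conj e = e := sub_eq_zero.1 h
      obtain ⟨s, u, hsu⟩ := hsurj e
      have h' : a (s + α*u) + a u*θ = a s + a u*θ := by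
        rw [← hconjlin, ← hsu, heq, hsu]
      have hu0 : u = 0 := by
        have h'' := (hψinj (s + α*u) u s u h').1
        have hαu : α * u = 0 := by linear_combination h''
        exact (mul_eq_zero.mp hαu).resolve_left hα0
      have heas : e = a s := by rw [hsu, hu0, map_zero, zero_mul, add_zero]
      have hsK : s^2 + s + 1 = 0 := by
        apply hainj
        rw [map_add, map_add, map_pow, map_one, map_zero, ← heas]
        exact he
      -- the norm-one subgroup argument
      have hUfin : ({v : AdjoinRoot f | v * conj v = 1}).Finite := Set.toFinite _
      have hmapsTo : Set.MapsTo (fun v : AdjoinRoot f => v^3)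
          {v : AdjoinRoot f | v * conj v = 1} {v : AdjoinRoot f | v * conj v = 1} := by
        intro v hv
        simp only [Set.mem_setOf_eq] at hv ⊢
        calc v^3 * conj (v^3) = (v * conj v)^3 := by rw [map_pow]; ring
        _ = 1 := by rw [hv]; norm_num
      have hinjOn : Set.InjOn (fun v : AdjoinRoot f => v^3)
          {v : AdjoinRoot f | v * conj v = 1} := by
        intro v hv v' hv' hvv
        simp only [Set.mem_setOf_eq] at hv hv'
        simp only at hvv
        have hv'0 : v' ≠ 0 := by
          intro h'
          rw [h', zero_mul] at hv'
          exact zero_ne_one hv'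
        have hcv'0 : conj v' ≠ 0 := by
          intro h'
          have : v' * conj v' = 0 := by rw [h', mul_zero]
          rw [hv'] at this
          exact one_ne_zero this
        have hr3 : (v*v'⁻¹)^3 = 1 := by
          rw [mul_pow, hvv]
          field_simp
        have hrN : (v*v'⁻¹) * conj (v*v'⁻¹) = 1 := by
          rw [map_mul, map_inv₀]
          field_simp
          linear_combination hv - hv'
        have heK : (a s)^2 + a s + 1 = 0 := by
          have h'' := congrArg a hsK
          rw [map_add, map_add, map_pow, map_one, map_zero] at h''
          exact h'' 
        rcases cube_classify h2E heK hr3 with h1 | h1 | h1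
        · have : v = v' := by
            have hh : v * v'⁻¹ * v' = 1 * v' := by rw [h1]
            rwa [inv_mul_cancel_right₀ hv'0, one_mul] at hh
          exact this
        · exfalso
          rw [h1] at hrN
          rw [hconja] at hrN
          have hss : s*s = 1 := by
            apply hainj
            rw [map_mul, map_one]
            exact hrN
          have hs0 : s = 0 := by linear_combination hsK - hss - h2
          rw [hs0] at hsK
          simp at hsK
        · exfalso
          rw [h1] at hrN
          have hconjas1 : conj (a s + 1) = a s + 1 := by
            rw [map_add, hconja, map_one]
          rw [hconjas1] at hrN
          have hss1 : (s+1)*(s+1) = 1 := by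
            apply hainj
            rw [map_mul, map_one, map_add, map_one]
            linear_combination hrN
          have hs0 : s * s = 0 := by linear_combination hss1 - s*h2
          rw [mul_self_eq_zero.mp hs0] at hsK
          simp at hsK
      have hbij := (Set.Finite.injOn_iff_bijOn_of_mapsTo hUfin hmapsTo).mp hinjOn
      have hθU : θ ∈ {v : AdjoinRoot f | v * conj v = 1} := by
        simp only [Set.mem_setOf_eq]
        rw [hconjθ]
        exact hθbE
      obtain ⟨v, hvU, hv3⟩ := hbij.surjOn hθU
      exact hnc v hv3
    · exact sub_eq_zero.1 h
  -- now the fiber analysis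
  have hb0 : x^3 + x*y^2 + α*y^3 ≠ 0 := f1_ne_zero hα hxy
  have hc0 : x^2 + α*x*y + y^2 ≠ 0 := g_ne_zero hirr hxy
  obtain ⟨z, hzdef⟩ : ∃ t, a x + a y*θ = t := ⟨_, rfl⟩
  have hzc : z * conj z = a (x^2 + α*x*y + y^2) := by rw [← hzdef]; exact hNval x y
  have hzb : (θ + a α)*z^3 + θ*(conj z)^3 = a α * a (x^3 + x*y^2 + α*y^3) := by
    rw [← hzdef]; exact hTval x y
  have hacz : a (x^2 + α*x*y + y^2) ≠ 0 := fun h => hc0 (hainj (h.trans (map_zero a).symm))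
  have hz0 : z ≠ 0 := by
    intro h
    rw [h, zero_mul] at hzc
    exact hacz hzc.symm
  have hcz0 : conj z ≠ 0 := by
    intro h
    rw [h, mul_zero] at hzc
    exact hacz hzc.symm
  -- the other two points
  obtain ⟨s1, u1, hq1⟩ := hsurj (e*z)
  obtain ⟨s2, u2, hq2⟩ := hsurj ((e+1)*z)
  rw [Set.ncard_eq_three]
  refine ⟨(x,y), (s1,u1), (s2,u2), ?_, ?_, ?_, ?_⟩
  · intro hEq
    rw [Prod.ext_iff] at hEq
    obtain ⟨hx', hy'⟩ := hEq
    simp only at hx' hy'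
    have h' : z = e*z := by
      rw [hq1, ← hx', ← hy', hzdef]
    have hfac : z * (1 - e) = 0 := by linear_combination h'
    rcases mul_eq_zero.mp hfac with h | h
    · exact hz0 h
    · exact he1 (by linear_combination -h : e = 1)
  · intro hEq
    rw [Prod.ext_iff] at hEq
    obtain ⟨hx', hy'⟩ := hEq
    simp only at hx' hy'
    have h' : z = (e+1)*z := by
      rw [hq2, ← hx', ← hy', hzdef]
    have hfac : z * e = 0 := by linear_combination -h'
    rcases mul_eq_zero.mp hfac with h | h
    · exact hz0 h
    · exact he0 h
  · intro hEq
    rw [Prod.ext_iff] at hEq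
    obtain ⟨hx', hy'⟩ := hEq
    simp only at hx' hy'
    have h' : e*z = (e+1)*z := by
      rw [hq1, hq2, hx', hy']
    have hzz : z = 0 := by linear_combination -h'
    exact hz0 hzz
  · ext ⟨u, v⟩
    simp only [Set.mem_setOf_eq, Set.mem_insert_iff, Set.mem_singleton_iff, Prod.mk.injEq]
    constructor
    · rintro ⟨hf1eq, hgeq⟩
      obtain ⟨zu, hzudef⟩ : ∃ t, a u + a v*θ = t := ⟨_, rfl⟩
      have hzuc : zu * conj zu = z * conj z := by
        rw [← hzudef, hNval u v, hzc]
        exact congrArg a hgeq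
      have hzub : (θ + a α)*zu^3 + θ*(conj zu)^3 = (θ + a α)*z^3 + θ*(conj z)^3 := by
        rw [← hzudef, hTval u v, hzb]
        exact congrArg (a α * ·) (congrArg a hf1eq)
      have kp : (θ + a α)*(zu^3+z^3)*(zu^3+θ^2*(conj z)^3) = 0 := by
        refine key_product (c3 := (z * conj z)^3) (Ab := (conj zu)^3)
          (ab := (θ + a α)*z^3 + θ*(conj z)^3) h2E hθbE ?_ hzub rfl ?_
        · rw [← mul_pow, hzuc, mul_pow]
        · rw [← mul_pow]
      have hθb0E : θ + a α ≠ 0 := by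
        intro h; rw [h] at hθbE; simp at hθbE
      have hcases : zu^3 = z^3 ∨ zu^3 = θ^2*(conj z)^3 := by
        rcases mul_eq_zero.mp kp with h | h
        · rcases mul_eq_zero.mp h with h' | h'
          · exact absurd h' hθb0E
          · left; linear_combination h' - z^3*h2E
        · right; linear_combination h - θ^2*(conj z)^3*h2E
      rcases hcases with hc | hc
      · have hr : (zu*z⁻¹)^3 = 1 := by
          rw [mul_pow, hc]
          field_simp
        rcases cube_classify h2E he hr with h | h | h
        · left
          have hzuz : zu = z := by
            have hh : zu * z⁻¹ * z = 1 * z := by rw [h]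
            rwa [inv_mul_cancel_right₀ hz0, one_mul] at hh
          have := hψinj u v x y (by rw [hzudef, hzuz, ← hzdef])
          exact ⟨this.1, this.2⟩
        · right; left
          have hzuz : zu = e*z := by
            have hh : zu * z⁻¹ * z = e * z := by rw [h]
            rwa [inv_mul_cancel_right₀ hz0] at hh
          have := hψinj u v s1 u1 (by rw [hzudef, hzuz, hq1])
          exact ⟨this.1, this.2⟩
        · right; right
          have hzuz : zu = (e+1)*z := by
            have hh : zu * z⁻¹ * z = (e+1) * z := by rw [h]
            rwa [inv_mul_cancel_right₀ hz0] at hh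
          have := hψinj u v s2 u2 (by rw [hzudef, hzuz, hq2])
          exact ⟨this.1, this.2⟩
      · exact (hLc zu (conj z) hcz0 hc).elim
    · rintro (⟨hu', hv'⟩ | ⟨hu', hv'⟩ | ⟨hu', hv'⟩)
      · subst hu'; subst hv'; exact ⟨rfl, rfl⟩
      · subst hu'; subst hv'
        have hcq1 : conj (e*z) = (e+1) * conj z := by rw [map_mul, hconje]
        constructor
        · apply mul_left_cancel₀ hα0
          apply hainj
          rw [map_mul, map_mul, ← hTval u v, ← hq1, ← hTval x y]
          rw [hcq1, mul_pow, mul_pow, he3, he13, one_mul, one_mul, hzdef]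
        · apply hainj
          rw [← hNval u v, ← hq1, ← hNval x y]
          rw [hcq1, hzdef]
          linear_combination z * conj z * hemul
      · subst hu'; subst hv'
        have hcq2 : conj ((e+1)*z) = e * conj z := by
          rw [map_mul, map_add, hconje, map_one]
          congr 1
          ring_nf
          linear_combination h2E
        constructor
        · apply mul_left_cancel₀ hα0
          apply hainj
          rw [map_mul, map_mul, ← hTval u v, ← hq2, ← hTval x y]
          rw [hcq2, mul_pow, mul_pow, he3, he13, one_mul, one_mul, hzdef]
        · apply hainj
          rw [← hNval u v, ← hq2, ← hNval x y]
          rw [hcq2, hzdef]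
          linear_combination z * conj z * hemul

end Stmt14

/-- With x³ + x + α rootless in F_{2^m}, the map
F(x,y) = (x³ + x·y² + α·y³, x⁵ + α·x⁴·y + (1+α²)·x·y⁴ + α·y⁵) is 3-to-1:
F⁻¹((0,0)) = {(0,0)} and every nonzero b in the image of F has exactly 3 preimages. -/
theorem stmt_14 (m : ℕ) (hm : 0 < m)
    (K : Type*) [Field K] [Fintype K] [CharP K 2] (hcard : Fintype.card K = 2 ^ m)
    (α : K) (hα : ∀ x : K, x ^ 3 + x + α ≠ 0)
    (F : K × K → K × K)
    (hF : ∀ x y : K, F (x, y) =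
      (x ^ 3 + x * y ^ 2 + α * y ^ 3,
       x ^ 5 + α * x ^ 4 * y + (1 + α ^ 2) * x * y ^ 4 + α * y ^ 5)) :
    F ⁻¹' {(0, 0)} = {(0, 0)} ∧
    ∀ b : K × K, b ∈ Set.range F → b ≠ (0, 0) → (F ⁻¹' {b}).ncard = 3 := by
  have h2K : (2:K) = 0 := by
    have h := CharP.cast_eq_zero K 2
    exact_mod_cast h
  have hα' : ∀ t : K, t^3 + t + α ≠ 0 := hα
  have hf2 : ∀ u v : K, u^5 + α*u^4*v + (1+α^2)*u*v^4 + α*v^5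
      = (u^3 + u*v^2 + α*v^3) * (u^2 + α*u*v + v^2) := by
    intro u v
    linear_combination (-(u^3*v^2) - α*u^2*v^3)*h2K
  constructor
  · ext ⟨u, v⟩
    simp only [Set.mem_preimage, Set.mem_singleton_iff, hF u v, Prod.mk.injEq]
    constructor
    · rintro ⟨h1, _⟩
      by_contra hne
      have hne' : ¬(u = 0 ∧ v = 0) := by
        rintro ⟨hu, hv⟩
        exact hne ⟨hu, hv⟩
      exact Stmt14.f1_ne_zero hα' hne' h1
    · rintro ⟨hu, hv⟩
      subst hu; subst hv
      constructor <;> ring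
  · intro b hb hb0
    obtain ⟨⟨x, y⟩, hFxy⟩ := hb
    have hxy : ¬(x = 0 ∧ y = 0) := by
      rintro ⟨hx, hy⟩
      apply hb0
      rw [← hFxy, hx, hy, hF 0 0]
      norm_num
    have hb1 : x^3 + x*y^2 + α*y^3 ≠ 0 := Stmt14.f1_ne_zero hα' hxy
    have hset : F ⁻¹' {b} = {p : K × K | p.1^3 + p.1*p.2^2 + α*p.2^3 = x^3 + x*y^2 + α*y^3 ∧
                 p.1^2 + α*p.1*p.2 + p.2^2 = x^2 + α*x*y + y^2} := by
      ext ⟨u, v⟩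
      simp only [Set.mem_preimage, Set.mem_singleton_iff, Set.mem_setOf_eq, ← hFxy,
        hF u v, hF x y, Prod.mk.injEq]
      constructor
      · rintro ⟨h1, h2'⟩
        refine ⟨by linear_combination h1, ?_⟩
        rw [hf2 u v, hf2 x y] at h2'
        rw [show u^3 + u*v^2 + α*v^3 = x^3 + x*y^2 + α*y^3 from by linear_combination h1] at h2'
        exact mul_left_cancel₀ hb1 h2'
      · rintro ⟨h1, h2'⟩
        refine ⟨by linear_combination h1, ?_⟩
        rw [hf2 u v, hf2 x y, h1, h2']
    rw [hset]
    by_cases hquad : ∃ t : K, t^2 + α*t + 1 = 0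
    · obtain ⟨θ₀, hθ₀⟩ := hquad
      exact Stmt14.split_case h2K hα' hθ₀ x y hxy
    · push_neg at hquad
      have hirr : ∀ t : K, t^2 + α*t + 1 ≠ 0 := fun t => hquad t
      exact Stmt14.field_case h2K hα' hirr x y hxy
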